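/- Let (𝒳, Σ) be a measurable space, μ a probability measure on 𝒳, and β₁, β₋₁ : 𝒳 → ℝ integrable functions. Let δ > 0 and let L : ℝ → ℝ be the doubled smoothed ramp loss: L(u) = 0 for u ≤ −δ, L(u) = (1 + u/δ)² for −δ < u ≤ 0, L(u) = 2 − (1 − u/δ)² for 0 < u < δ, and L(u) = 2 for u ≥ δ. Then the supremum over measurable f : 𝒳 → ℝ of ∫ (L(f(x))·β₁(x) + L(−f(x))·β₋₁(x)) dμ(x) equals 2·∫ max(β₁(x), β₋₁(x)) dμ(x), and this supremum is attained by the function f*(x) = δ if β₁(x) ≥ β₋₁(x) and f*(x) = −δ otherwise. Moreover, the supremum over measurable d : 𝒳 → {−1, 1} of ∫ (1{d(x) = 1}·β₁(x) + 1{d(x) = −1}·β₋₁(x)) dμ(x) equals ∫ max(β₁(x), β₋₁(x)) dμ(x). -/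

import Mathlib

open MeasureTheory

/-- The doubled smoothed ramp loss: `L(u) = 0` for `u ≤ -δ`, `(1+u/δ)²` for `-δ < u ≤ 0`,
`2 - (1-u/δ)²` for `0 < u < δ`, and `2` for `u ≥ δ`. -/
noncomputable def rampL (δ u : ℝ) : ℝ :=
  if u ≤ -δ then 0
  else if u ≤ 0 then (1 + u / δ) ^ 2
  else if u < δ then 2 - (1 - u / δ) ^ 2
  else 2

lemma rampL_meas (δ : ℝ) : Measurable (rampL δ) := by
  unfold rampL
  refine Measurable.ite (measurableSet_le measurable_id measurable_const) measurable_const ?_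
  refine Measurable.ite (measurableSet_le measurable_id measurable_const) (by measurability) ?_
  exact Measurable.ite (measurableSet_lt measurable_id measurable_const) (by measurability)
    measurable_const

lemma rampL_nonneg {δ : ℝ} (hδ : 0 < δ) (u : ℝ) : 0 ≤ rampL δ u := by
  unfold rampL
  split_ifs with h1 h2 h3
  · linarith
  · positivity
  · have h4 : u / δ < 1 := (div_lt_one hδ).2 (by linarith)
    have h5 : 0 < u / δ := div_pos (by linarith) hδ
    nlinarith
  · linarith

lemma rampL_le_two {δ : ℝ} (hδ : 0 < δ) (u : ℝ) : rampL δ u ≤ 2 := by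
  unfold rampL
  split_ifs with h1 h2 h3
  · linarith
  · have h4 : -1 < u / δ := by rw [neg_lt, ← neg_div]; exact (div_lt_one hδ).2 (by linarith)
    have h5 : u / δ ≤ 0 := div_nonpos_of_nonpos_of_nonneg h2 hδ.le
    nlinarith
  · nlinarith [sq_nonneg (1 - u / δ)]
  · linarith

lemma rampL_add {δ : ℝ} (hδ : 0 < δ) (u : ℝ) : rampL δ u + rampL δ (-u) = 2 := by
  unfold rampL
  split_ifs with h1 h2 h3 h4 h5 h6 <;>
    first
    | ring1
    | linarith
    | (have hu : u = 0 := le_antisymm (by linarith) (by linarith)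
       subst hu; norm_num)

lemma rampL_delta {δ : ℝ} (hδ : 0 < δ) : rampL δ δ = 2 := by
  unfold rampL; split_ifs <;> first | rfl | linarith

lemma rampL_neg_delta {δ : ℝ} (hδ : 0 < δ) : rampL δ (-δ) = 0 := by
  unfold rampL; split_ifs <;> first | rfl | linarith


/-- the key identities (key0)-(key2) of the paper. For integrable payloads
`β₁, β₋₁`, the supremum over measurable `f` of `∫ (L(f)β₁ + L(-f)β₋₁) dμ` equals
`2 ∫ max(β₁, β₋₁) dμ`, attained at `f* = δ·1{β₁ ≥ β₋₁} - δ·1{β₁ < β₋₁}`; and the supremum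
over measurable rules `d : 𝒳 → {-1,1}` of `∫ (1{d=1}β₁ + 1{d=-1}β₋₁) dμ` equals
`∫ max(β₁, β₋₁) dμ`. -/
theorem stmt_12 {𝒳 : Type*} [MeasurableSpace 𝒳] (μ : Measure 𝒳) [IsProbabilityMeasure μ]
    (β1 βm1 : 𝒳 → ℝ) (hβ1m : Measurable β1) (hβm1m : Measurable βm1)
    (hβ1 : Integrable β1 μ) (hβm1 : Integrable βm1 μ)
    (δ : ℝ) (hδ : 0 < δ) :
    sSup {v : ℝ | ∃ f : 𝒳 → ℝ, Measurable f ∧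
        v = ∫ x, (rampL δ (f x) * β1 x + rampL δ (-f x) * βm1 x) ∂μ}
      = 2 * ∫ x, max (β1 x) (βm1 x) ∂μ ∧
    (Measurable (fun x => if βm1 x ≤ β1 x then δ else -δ) ∧
      ∫ x, (rampL δ ((if βm1 x ≤ β1 x then δ else -δ) : ℝ) * β1 x
          + rampL δ (-((if βm1 x ≤ β1 x then δ else -δ) : ℝ)) * βm1 x) ∂μ
        = 2 * ∫ x, max (β1 x) (βm1 x) ∂μ) ∧
    sSup {v : ℝ | ∃ d : 𝒳 → ℝ, Measurable d ∧ (∀ x, d x = 1 ∨ d x = -1) ∧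
        v = ∫ x, ((if d x = 1 then (1 : ℝ) else 0) * β1 x
          + (if d x = -1 then (1 : ℝ) else 0) * βm1 x) ∂μ}
      = ∫ x, max (β1 x) (βm1 x) ∂μ := by
  have hmax : Integrable (fun x => max (β1 x) (βm1 x)) μ := hβ1.sup hβm1
  set I2 : ℝ := ∫ x, max (β1 x) (βm1 x) ∂μ with hI2
  -- the candidate optimal f*
  have hfstar_meas : Measurable (fun x => if βm1 x ≤ β1 x then δ else -δ) :=
    Measurable.ite (measurableSet_le hβm1m hβ1m) measurable_const measurable_const
  -- its integrand equals 2 * max pointwise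
  have hfstar_pt : ∀ x, rampL δ ((if βm1 x ≤ β1 x then δ else -δ) : ℝ) * β1 x
      + rampL δ (-((if βm1 x ≤ β1 x then δ else -δ) : ℝ)) * βm1 x
      = 2 * max (β1 x) (βm1 x) := by
    intro x
    by_cases h : βm1 x ≤ β1 x
    · simp only [h, if_pos, rampL_delta hδ, rampL_neg_delta hδ, max_eq_left h]; ring
    · simp only [h, if_neg, not_false_iff, neg_neg, rampL_delta hδ, rampL_neg_delta hδ,
        max_eq_right (le_of_not_ge h)]; ring
  have hfstar_int : ∫ x, (rampL δ ((if βm1 x ≤ β1 x then δ else -δ) : ℝ) * β1 x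
      + rampL δ (-((if βm1 x ≤ β1 x then δ else -δ) : ℝ)) * βm1 x) ∂μ = 2 * I2 := by
    rw [hI2, ← integral_const_mul]
    exact integral_congr_ae (Filter.Eventually.of_forall hfstar_pt)
  -- integrability and bound for any measurable f
  have hint : ∀ f : 𝒳 → ℝ, Measurable f →
      Integrable (fun x => rampL δ (f x) * β1 x + rampL δ (-f x) * βm1 x) μ := by
    intro f hf
    have h1 : Integrable (fun x => rampL δ (f x) * β1 x) μ :=
      hβ1.bdd_mul ((rampL_meas δ).comp hf).aestronglyMeasurable
        (Filter.Eventually.of_forall fun x => by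
          rw [Real.norm_eq_abs, abs_of_nonneg (rampL_nonneg hδ _)]; exact rampL_le_two hδ _)
    have h2 : Integrable (fun x => rampL δ (-f x) * βm1 x) μ :=
      hβm1.bdd_mul ((rampL_meas δ).comp hf.neg).aestronglyMeasurable
        (Filter.Eventually.of_forall fun x => by
          rw [Real.norm_eq_abs, abs_of_nonneg (rampL_nonneg hδ _)]; exact rampL_le_two hδ _)
    exact h1.add h2
  have hub : ∀ f : 𝒳 → ℝ, Measurable f →
      ∫ x, (rampL δ (f x) * β1 x + rampL δ (-f x) * βm1 x) ∂μ ≤ 2 * I2 := by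
    intro f hf
    have hpt : ∀ x, rampL δ (f x) * β1 x + rampL δ (-f x) * βm1 x
        ≤ 2 * max (β1 x) (βm1 x) := by
      intro x
      have ha := rampL_nonneg hδ (f x)
      have hb := rampL_nonneg hδ (-f x)
      have hs := rampL_add hδ (f x)
      have h1 : β1 x ≤ max (β1 x) (βm1 x) := le_max_left _ _
      have h2 : βm1 x ≤ max (β1 x) (βm1 x) := le_max_right _ _
      have key : rampL δ (f x) * max (β1 x) (βm1 x) + rampL δ (-f x) * max (β1 x) (βm1 x)
          = 2 * max (β1 x) (βm1 x) := by rw [← add_mul, hs]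
      have k1 := mul_le_mul_of_nonneg_left h1 ha
      have k2 := mul_le_mul_of_nonneg_left h2 hb
      linarith
    calc ∫ x, (rampL δ (f x) * β1 x + rampL δ (-f x) * βm1 x) ∂μ
        ≤ ∫ x, 2 * max (β1 x) (βm1 x) ∂μ :=
          integral_mono (hint f hf) (hmax.const_mul 2) hpt
      _ = 2 * I2 := by rw [hI2, integral_const_mul]
  have hmem : (2 * I2) ∈ {v : ℝ | ∃ f : 𝒳 → ℝ, Measurable f ∧
      v = ∫ x, (rampL δ (f x) * β1 x + rampL δ (-f x) * βm1 x) ∂μ} :=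
    ⟨_, hfstar_meas, hfstar_int.symm⟩
  have hbdd : ∀ v ∈ {v : ℝ | ∃ f : 𝒳 → ℝ, Measurable f ∧
      v = ∫ x, (rampL δ (f x) * β1 x + rampL δ (-f x) * βm1 x) ∂μ}, v ≤ 2 * I2 := by
    rintro v ⟨f, hf, rfl⟩; exact hub f hf
  refine ⟨le_antisymm (csSup_le ⟨_, hmem⟩ hbdd) (le_csSup ⟨2 * I2, hbdd⟩ hmem),
    ⟨hfstar_meas, hfstar_int⟩, ?_⟩
  -- decision part
  have hdint : ∀ d : 𝒳 → ℝ, Measurable d →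
      Integrable (fun x => (if d x = 1 then (1 : ℝ) else 0) * β1 x
        + (if d x = -1 then (1 : ℝ) else 0) * βm1 x) μ := by
    intro d hd
    have m1 : Measurable (fun x => (if d x = 1 then (1 : ℝ) else 0)) :=
      Measurable.ite (hd (measurableSet_singleton 1)) measurable_const measurable_const
    have m2 : Measurable (fun x => (if d x = -1 then (1 : ℝ) else 0)) :=
      Measurable.ite (hd (measurableSet_singleton (-1))) measurable_const measurable_const
    have h1 : Integrable (fun x => (if d x = 1 then (1 : ℝ) else 0) * β1 x) μ :=
      hβ1.bdd_mul m1.aestronglyMeasurable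
        (c := 1) (Filter.Eventually.of_forall fun x => by split_ifs <;> simp)
    have h2 : Integrable (fun x => (if d x = -1 then (1 : ℝ) else 0) * βm1 x) μ :=
      hβm1.bdd_mul m2.aestronglyMeasurable
        (c := 1) (Filter.Eventually.of_forall fun x => by split_ifs <;> simp)
    exact h1.add h2
  have hdub : ∀ d : 𝒳 → ℝ, Measurable d → (∀ x, d x = 1 ∨ d x = -1) →
      ∫ x, ((if d x = 1 then (1 : ℝ) else 0) * β1 x
        + (if d x = -1 then (1 : ℝ) else 0) * βm1 x) ∂μ ≤ I2 := by
    intro d hd hdval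
    have hpt : ∀ x, (if d x = 1 then (1 : ℝ) else 0) * β1 x
        + (if d x = -1 then (1 : ℝ) else 0) * βm1 x ≤ max (β1 x) (βm1 x) := by
      intro x
      rcases hdval x with h | h <;> rw [h] <;> norm_num [le_sup_left, le_sup_right]
    exact integral_mono (hdint d hd) hmax hpt
  set dstar : 𝒳 → ℝ := fun x => if βm1 x ≤ β1 x then 1 else -1 with hdstar
  have hdstar_meas : Measurable dstar :=
    Measurable.ite (measurableSet_le hβm1m hβ1m) measurable_const measurable_const
  have hdstar_val : ∀ x, dstar x = 1 ∨ dstar x = -1 := by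
    intro x; by_cases h : βm1 x ≤ β1 x <;> simp [hdstar, h]
  have hdstar_int : ∫ x, ((if dstar x = 1 then (1 : ℝ) else 0) * β1 x
      + (if dstar x = -1 then (1 : ℝ) else 0) * βm1 x) ∂μ = I2 := by
    rw [hI2]
    refine integral_congr_ae (Filter.Eventually.of_forall fun x => ?_)
    simp only [hdstar]
    by_cases h : βm1 x ≤ β1 x
    · norm_num [h, max_eq_left h]
    · norm_num [h, max_eq_right (le_of_not_ge h)]
  have hmem' : I2 ∈ {v : ℝ | ∃ d : 𝒳 → ℝ, Measurable d ∧ (∀ x, d x = 1 ∨ d x = -1) ∧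
      v = ∫ x, ((if d x = 1 then (1 : ℝ) else 0) * β1 x
        + (if d x = -1 then (1 : ℝ) else 0) * βm1 x) ∂μ} :=
    ⟨dstar, hdstar_meas, hdstar_val, hdstar_int.symm⟩
  have hbdd' : ∀ v ∈ {v : ℝ | ∃ d : 𝒳 → ℝ, Measurable d ∧ (∀ x, d x = 1 ∨ d x = -1) ∧
      v = ∫ x, ((if d x = 1 then (1 : ℝ) else 0) * β1 x
        + (if d x = -1 then (1 : ℝ) else 0) * βm1 x) ∂μ}, v ≤ I2 := by
    rintro v ⟨d, hd, hdv, rfl⟩; exact hdub d hd hdv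
  exact le_antisymm (csSup_le ⟨_, hmem'⟩ hbdd') (le_csSup ⟨I2, hbdd'⟩ hmem')
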